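/- For every real λ > 0, ∫_0^∞ ( ∫_y^∞ 8λπ x · exp(−4λπ x²) dx ) · 2λπ y · exp(−λπ y²) dy = 1/5. In particular the value is independent of λ. -/

import Mathlib

open Real MeasureTheory

lemma key_int (c a : ℝ) (hc : 0 < c) :
    ∫ x in Set.Ioi a, 2 * c * x * Real.exp (-(c * x ^ 2)) = Real.exp (-(c * a ^ 2)) := by
  have hderiv : ∀ x ∈ Set.Ici a,
      HasDerivAt (fun x : ℝ => -Real.exp (-(c * x ^ 2)))
        (2 * c * x * Real.exp (-(c * x ^ 2))) x := by
    intro x _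
    have h1 : HasDerivAt (fun x : ℝ => -(c * x ^ 2)) (-(c * (2 * x))) x := by
      simpa using ((hasDerivAt_pow 2 x).const_mul c).fun_neg
    have := (h1.exp).fun_neg
    refine this.congr_deriv ?_
    ring
  have hint : IntegrableOn (fun x => 2 * c * x * Real.exp (-(c * x ^ 2))) (Set.Ioi a) := by
    have h0 := (integrable_mul_exp_neg_mul_sq hc).const_mul (2 * c)
    have h2 : (fun x : ℝ => 2 * c * (x * Real.exp (-c * x ^ 2)))
        = fun x => 2 * c * x * Real.exp (-(c * x ^ 2)) := by
      funext x; ring_nf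
    rw [h2] at h0
    exact h0.integrableOn
  have htend : Filter.Tendsto (fun x : ℝ => -Real.exp (-(c * x ^ 2))) Filter.atTop (nhds 0) := by
    rw [← neg_zero]
    refine Filter.Tendsto.neg ?_
    have h1 : Filter.Tendsto (fun x : ℝ => c * x ^ 2) Filter.atTop Filter.atTop :=
      (Filter.tendsto_pow_atTop (by norm_num)).const_mul_atTop hc
    simpa using h1
  have := integral_Ioi_of_hasDerivAt_of_tendsto' hderiv hint htend
  rw [this]; ring_nf

theorem stmt_6 (l : ℝ) (hl : 0 < l) :
    ∫ y in Set.Ioi (0 : ℝ),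
        (∫ x in Set.Ioi y, 8 * l * π * x * Real.exp (-(4 * l * π * x ^ 2))) *
          (2 * l * π * y * Real.exp (-(l * π * y ^ 2))) = 1 / 5 := by
  have h4 : (0:ℝ) < 4 * l * π := by positivity
  have h5 : (0:ℝ) < 5 * (l * π) := by positivity
  have hinner : ∀ y : ℝ,
      (∫ x in Set.Ioi y, 8 * l * π * x * Real.exp (-(4 * l * π * x ^ 2)))
        = Real.exp (-(4 * l * π * y ^ 2)) := by
    intro y
    rw [← key_int (4 * l * π) y h4]
    congr 1; funext x; ring_nf
  have hcomb : ∀ y : ℝ,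
      Real.exp (-(4 * l * π * y ^ 2)) * (2 * l * π * y * Real.exp (-(l * π * y ^ 2)))
        = (1/5) * (2 * (5 * (l * π)) * y * Real.exp (-(5 * (l * π) * y ^ 2))) := by
    intro y
    have he : -(5 * (l * π) * y ^ 2) = (-(4 * l * π * y ^ 2)) + (-(l * π * y ^ 2)) := by ring
    rw [he, Real.exp_add]; ring
  rw [setIntegral_congr_fun measurableSet_Ioi (fun y _ => by rw [hinner y, hcomb y]),
    integral_const_mul, key_int (5 * (l * π)) 0 h5]
  norm_num
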